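/- arXiv:1901.10908 — 3 statements merged into one kernel-verified Lean document; each statement's English description precedes it below -/
import Mathlib

section
/- Let 0 < p̂ ≤ p̌ < 1, p₀₁ ∈ (0,1), and L > 0. Then there exist constants C_g > 0 and C_h > 0, depending only on p̂ and p̌, with the following property: for every probability space (Ω, ℱ, ℙ), every pair of real random variables K, K' on Ω with E[|K − K'|²] < ∞ and E[e^{2K'}] < ∞, every L-Lipschitz function f : ℝ → [0,∞), and every p ∈ [p̂, p̌], one has |E[f(h(p,K))·g(p,K)] − E[f(h(p,K'))·g(p,K')]| ≤ ((L(1 + p₀₁) + f(p₀₁))·C_g + (L·C_h / p̂²)·(E[e^{2K'}])^{1/2}) · (E[|K − K'|²])^{1/2}. -/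
open MeasureTheory

lemma dpos {p : ℝ} (hp0 : 0 < p) (hp1 : p < 1) (z : ℝ) :
    0 < 1 + p * (-1 + Real.exp (-z)) := by
  have := Real.exp_pos (-z); nlinarith

lemma g_le {p : ℝ} (hp0 : 0 < p) (hp1 : p < 1) (z : ℝ) :
    Real.exp (-z) / (1 + p * (-1 + Real.exp (-z)))^2 ≤ 1 / (4*p*(1-p)) := by
  have hu := Real.exp_pos (-z)
  have hd := dpos hp0 hp1 z
  have h4 : 0 < 4*p*(1-p) := by nlinarith
  rw [div_le_div_iff₀ (by positivity) h4]
  nlinarith [sq_nonneg ((1-p) - p*Real.exp (-z))]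

lemma g_le' {p : ℝ} (hp0 : 0 < p) (hp1 : p < 1) (z : ℝ) :
    Real.exp (-z) / (1 + p * (-1 + Real.exp (-z)))^2 ≤ Real.exp z / p^2 := by
  have hu := Real.exp_pos (-z)
  have hd := dpos hp0 hp1 z
  have hez := Real.exp_pos z
  have h1 : Real.exp z * Real.exp (-z) = 1 := by
    rw [← Real.exp_add]; simp
  have hpu : p * Real.exp (-z) ≤ 1 + p * (-1 + Real.exp (-z)) := by nlinarith
  have hsq : (p * Real.exp (-z))^2 ≤ (1 + p * (-1 + Real.exp (-z)))^2 :=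
    pow_le_pow_left₀ (by positivity) hpu 2
  have h2 : Real.exp z * (p * Real.exp (-z))^2 = p^2 * Real.exp (-z) := by
    have h3 : Real.exp z * (p * Real.exp (-z))^2
        = p^2 * Real.exp (-z) * (Real.exp z * Real.exp (-z)) := by ring
    rw [h3, h1, mul_one]
  rw [div_le_div_iff₀ (by positivity) (by positivity)]
  nlinarith [mul_le_mul_of_nonneg_left hsq hez.le]

lemma h_mem {p : ℝ} (hp0 : 0 < p) (hp1 : p < 1) (z : ℝ) :
    p * Real.exp (-z) / (1 + p * (-1 + Real.exp (-z))) ∈ Set.Icc (0:ℝ) 1 := by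
  have hu := Real.exp_pos (-z)
  have hd := dpos hp0 hp1 z
  constructor
  · positivity
  · rw [div_le_one hd]; nlinarith

lemma exp_diff_le {z z' : ℝ} (hzz : z ≤ z') :
    Real.exp (-z) - Real.exp (-z') ≤ Real.exp (-z) * (z' - z) := by
  have h1 : (z - z') + 1 ≤ Real.exp (z - z') := Real.add_one_le_exp _
  have h2 : Real.exp (-z) * Real.exp (z - z') = Real.exp (-z') := by
    rw [← Real.exp_add]; ring_nf
  nlinarith [Real.exp_pos (-z)]

lemma h_lip_le {p z z' : ℝ} (hp0 : 0 < p) (hp1 : p < 1) (hzz : z ≤ z') :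
    |p * Real.exp (-z) / (1 + p * (-1 + Real.exp (-z)))
      - p * Real.exp (-z') / (1 + p * (-1 + Real.exp (-z')))| ≤ z' - z := by
  have hu := Real.exp_pos (-z)
  have hu' := Real.exp_pos (-z')
  have hd := dpos hp0 hp1 z
  have hd' := dpos hp0 hp1 z'
  have hle : Real.exp (-z') ≤ Real.exp (-z) := Real.exp_le_exp.2 (by linarith)
  have hkey := exp_diff_le hzz
  have h_eq : p * Real.exp (-z) / (1 + p * (-1 + Real.exp (-z)))
      - p * Real.exp (-z') / (1 + p * (-1 + Real.exp (-z')))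
      = p * (1-p) * (Real.exp (-z) - Real.exp (-z'))
        / ((1 + p * (-1 + Real.exp (-z))) * (1 + p * (-1 + Real.exp (-z')))) := by
    rw [div_sub_div _ _ hd.ne' hd'.ne']; congr 1; ring
  rw [h_eq, abs_of_nonneg (div_nonneg (mul_nonneg (mul_nonneg hp0.le (by linarith)) (by linarith)) (by positivity))]
  rw [div_le_iff₀ (by positivity)]
  have hA : p * Real.exp (-z) ≤ 1 + p * (-1 + Real.exp (-z)) := by nlinarith
  have hB : 1 - p ≤ 1 + p * (-1 + Real.exp (-z')) := by nlinarith
  nlinarith [mul_le_mul hA hB (by nlinarith) hd.le,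
    mul_le_mul_of_nonneg_left hkey (by nlinarith : (0:ℝ) ≤ p * (1-p)),
    mul_le_mul_of_nonneg_left (mul_le_mul hA hB (by nlinarith) hd.le)
      (by linarith : (0:ℝ) ≤ z' - z)]
set_option maxHeartbeats 1000000 in

lemma g_lip_le {p z z' : ℝ} (hp0 : 0 < p) (hp1 : p < 1) (hzz : z ≤ z') :
    |Real.exp (-z) / (1 + p * (-1 + Real.exp (-z)))^2
      - Real.exp (-z') / (1 + p * (-1 + Real.exp (-z')))^2| ≤ (z' - z) / (4*p*(1-p)) := by
  have hu := Real.exp_pos (-z)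
  have hu' := Real.exp_pos (-z')
  have hd : (0:ℝ) < 1 + p * (-1 + Real.exp (-z)) := by nlinarith
  have hd' : (0:ℝ) < 1 + p * (-1 + Real.exp (-z')) := by nlinarith
  have hle : Real.exp (-z') ≤ Real.exp (-z) := Real.exp_le_exp.2 (by linarith)
  have h1 : (z - z') + 1 ≤ Real.exp (z - z') := Real.add_one_le_exp _
  have h2 : Real.exp (-z) * Real.exp (z - z') = Real.exp (-z') := by
    rw [← Real.exp_add]; ring_nf
  have hkey : Real.exp (-z) - Real.exp (-z') ≤ Real.exp (-z) * (z' - z) := by nlinarith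
  set u := Real.exp (-z) with hu_def
  set u' := Real.exp (-z') with hu'_def
  set d := 1 + p * (-1 + u) with hd_def
  set d' := 1 + p * (-1 + u') with hd'_def
  have h1p : (0:ℝ) < 1 - p := by linarith
  have h4 : (0:ℝ) < 4*p*(1-p) := by positivity
  have huu : (0:ℝ) ≤ u - u' := by linarith
  have hz4 : (0:ℝ) ≤ z' - z := by linarith
  have h_eq : u / d^2 - u' / d'^2 = (u - u') * ((1-p)^2 - p^2*u*u') / (d^2 * d'^2) := by
    rw [div_sub_div _ _ (pow_pos hd 2).ne' (pow_pos hd' 2).ne']; congr 1; rw [hd_def, hd'_def]; ring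
  rw [h_eq, abs_div, abs_of_pos (by positivity : (0:ℝ) < d^2 * d'^2),
    div_le_div_iff₀ (by positivity) h4]
  rcases le_total (p^2*u*u') ((1-p)^2) with hc | hc
  · rw [abs_of_nonneg (mul_nonneg huu (by linarith))]
    have hA : 4*p*(1-p)*u ≤ d^2 := by nlinarith [sq_nonneg ((1-p) - p*u)]
    have hB : (1-p)^2 ≤ d'^2 := by nlinarith [sq_nonneg (p*u'), mul_nonneg (mul_nonneg hp0.le hu'.le) h1p.le]
    have hAB : (4*p*(1-p)*u) * (1-p)^2 ≤ d^2 * d'^2 :=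
      mul_le_mul hA hB (by positivity) (by positivity)
    nlinarith [mul_le_mul_of_nonneg_left hAB hz4,
      mul_le_mul_of_nonneg_left hkey (by positivity : (0:ℝ) ≤ 4*p*(1-p)*(1-p)^2),
      mul_nonneg (mul_nonneg huu h4.le) (by positivity : (0:ℝ) ≤ p^2*u*u')]
  · rw [abs_mul, abs_of_nonneg huu, abs_of_nonpos (by linarith : (1-p)^2 - p^2*u*u' ≤ 0)]
    have hA : p^2*u^2 ≤ d^2 := by nlinarith [mul_nonneg (mul_nonneg hp0.le hu.le) h1p.le, sq_nonneg (1-p)]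
    have hB : 4*p*(1-p)*u' ≤ d'^2 := by nlinarith [sq_nonneg ((1-p) - p*u')]
    have hAB : (p^2*u^2) * (4*p*(1-p)*u') ≤ d^2 * d'^2 :=
      mul_le_mul hA hB (by positivity) (by positivity)
    nlinarith [mul_le_mul_of_nonneg_left hAB hz4,
      mul_le_mul_of_nonneg_left hkey (by positivity : (0:ℝ) ≤ 4*p*(1-p)*(p^2*u*u')),
      mul_nonneg (mul_nonneg huu h4.le) (sq_nonneg (1-p))]
-- pointwise estimate
lemma pointwise_est {phat pcheck p01 L : ℝ}
    (h1 : 0 < phat) (h2 : phat ≤ pcheck) (h3 : pcheck < 1)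
    (hp01 : p01 ∈ Set.Ioo (0:ℝ) 1) (hL : 0 < L)
    {f : ℝ → ℝ} (hf0 : ∀ x, 0 ≤ f x) (hfL : ∀ x y, |f x - f y| ≤ L * |x - y|)
    {p : ℝ} (hp : p ∈ Set.Icc phat pcheck) (z z' : ℝ) :
    |f (p * Real.exp (-z) / (1 + p * (-1 + Real.exp (-z)))) *
        (Real.exp (-z) / (1 + p * (-1 + Real.exp (-z)))^2) -
      f (p * Real.exp (-z') / (1 + p * (-1 + Real.exp (-z')))) *
        (Real.exp (-z') / (1 + p * (-1 + Real.exp (-z')))^2)|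
      ≤ ((L * (1 + p01) + f p01) * (1 / (4 * phat * (1 - pcheck)))
          + (L / phat^2) * Real.exp z') * |z - z'| := by
  obtain ⟨hpl, hpr⟩ := hp
  have hp0 : 0 < p := lt_of_lt_of_le h1 hpl
  have hp1 : p < 1 := lt_of_le_of_lt hpr h3
  set H := fun w : ℝ => p * Real.exp (-w) / (1 + p * (-1 + Real.exp (-w))) with hH
  set G := fun w : ℝ => Real.exp (-w) / (1 + p * (-1 + Real.exp (-w)))^2 with hG
  have hGlip : |G z - G z'| ≤ (1 / (4 * phat * (1 - pcheck))) * |z - z'| := by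
    have hcmp : (1:ℝ) / (4 * p * (1 - p)) ≤ 1 / (4 * phat * (1 - pcheck)) := by
      have hq : (0:ℝ) < 4 * phat * (1 - pcheck) := by nlinarith
      apply one_div_le_one_div_of_le hq
      have : (0:ℝ) < 1 - p := by linarith
      nlinarith
    rcases le_total z z' with hzz | hzz
    · calc |G z - G z'| ≤ (z' - z) / (4*p*(1-p)) := g_lip_le hp0 hp1 hzz
        _ = (1 / (4*p*(1-p))) * |z - z'| := by
            rw [abs_of_nonpos (by linarith : z - z' ≤ 0)]; ring
        _ ≤ (1 / (4 * phat * (1 - pcheck))) * |z - z'| := by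
            exact mul_le_mul_of_nonneg_right hcmp (abs_nonneg _)
    · calc |G z - G z'| = |G z' - G z| := abs_sub_comm _ _
        _ ≤ (z - z') / (4*p*(1-p)) := g_lip_le hp0 hp1 hzz
        _ = (1 / (4*p*(1-p))) * |z - z'| := by
            rw [abs_of_nonneg (by linarith : 0 ≤ z - z')]; ring
        _ ≤ (1 / (4 * phat * (1 - pcheck))) * |z - z'| := by
            exact mul_le_mul_of_nonneg_right hcmp (abs_nonneg _)
  have hHlip : |H z - H z'| ≤ |z - z'| := by
    rcases le_total z z' with hzz | hzz
    · calc |H z - H z'| ≤ z' - z := h_lip_le hp0 hp1 hzz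
        _ = |z - z'| := by rw [abs_of_nonpos (by linarith : z - z' ≤ 0)]; ring
    · calc |H z - H z'| = |H z' - H z| := abs_sub_comm _ _
        _ ≤ z - z' := h_lip_le hp0 hp1 hzz
        _ = |z - z'| := by rw [abs_of_nonneg (by linarith : 0 ≤ z - z')]
  have hHz := h_mem hp0 hp1 z
  have hfb : f (H z) ≤ f p01 + L * (1 + p01) := by
    have := hfL (H z) p01
    have habs : |H z - p01| ≤ 1 + p01 := by
      obtain ⟨ha, hb⟩ := hHz
      obtain ⟨hc, hd⟩ := hp01
      rw [abs_le]
      constructor <;> nlinarith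
    have : f (H z) - f p01 ≤ L * (1 + p01) := by
      calc f (H z) - f p01 ≤ |f (H z) - f p01| := le_abs_self _
        _ ≤ L * |H z - p01| := hfL _ _
        _ ≤ L * (1 + p01) := mul_le_mul_of_nonneg_left habs hL.le
    linarith
  have hGz'b : G z' ≤ Real.exp z' / phat^2 := by
    calc G z' ≤ Real.exp z' / p^2 := g_le' hp0 hp1 z'
      _ ≤ Real.exp z' / phat^2 := by
          apply div_le_div_of_nonneg_left (Real.exp_pos z').le (by positivity)
          nlinarith
  have hGz'0 : 0 ≤ G z' := by
    have := Real.exp_pos (-z'); have := dpos hp0 hp1 z'; positivity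
  have key : f (H z) * G z - f (H z') * G z'
      = f (H z) * (G z - G z') + (f (H z) - f (H z')) * G z' := by ring
  calc |f (H z) * G z - f (H z') * G z'|
      ≤ |f (H z)| * |G z - G z'| + |f (H z) - f (H z')| * |G z'| := by
        rw [key]
        refine (abs_add_le _ _).trans ?_
        rw [abs_mul, abs_mul]
    _ ≤ (f p01 + L * (1 + p01)) * ((1 / (4 * phat * (1 - pcheck))) * |z - z'|)
        + (L * |z - z'|) * (Real.exp z' / phat^2) := by
        apply add_le_add
        · apply mul_le_mul _ hGlip (abs_nonneg _)
            (by have := hf0 p01; obtain ⟨hc, hd⟩ := hp01; nlinarith)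
          rw [abs_of_nonneg (hf0 _)]; exact hfb
        · apply mul_le_mul
          · calc |f (H z) - f (H z')| ≤ L * |H z - H z'| := hfL _ _
              _ ≤ L * |z - z'| := mul_le_mul_of_nonneg_left hHlip hL.le
          · rw [abs_of_nonneg hGz'0]; exact hGz'b
          · exact abs_nonneg _
          · positivity
    _ = ((L * (1 + p01) + f p01) * (1 / (4 * phat * (1 - pcheck)))
          + (L / phat^2) * Real.exp z') * |z - z'| := by ring

lemma my_cs {Ω : Type} [MeasurableSpace Ω] (μ : Measure Ω) (u v : Ω → ℝ)
    (hu0 : ∀ ω, 0 ≤ u ω) (hv0 : ∀ ω, 0 ≤ v ω)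
    (hum : AEStronglyMeasurable u μ) (hvm : AEStronglyMeasurable v μ)
    (hu2 : Integrable (fun ω => u ω ^ 2) μ) (hv2 : Integrable (fun ω => v ω ^ 2) μ) :
    ∫ ω, u ω * v ω ∂μ ≤ Real.sqrt (∫ ω, u ω ^ 2 ∂μ) * Real.sqrt (∫ ω, v ω ^ 2 ∂μ) := by
  have hpq : Real.HolderConjugate 2 2 := Real.holderConjugate_iff.mpr ⟨one_lt_two, by norm_num⟩
  have hu : MemLp u (ENNReal.ofReal 2) μ := by
    rw [show ENNReal.ofReal 2 = 2 by norm_num]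
    exact (memLp_two_iff_integrable_sq hum).2 hu2
  have hv : MemLp v (ENNReal.ofReal 2) μ := by
    rw [show ENNReal.ofReal 2 = 2 by norm_num]
    exact (memLp_two_iff_integrable_sq hvm).2 hv2
  have h := integral_mul_le_Lp_mul_Lq_of_nonneg hpq
    (Filter.Eventually.of_forall hu0) (Filter.Eventually.of_forall hv0) hu hv
  have e1 : ∫ ω, u ω ^ (2:ℝ) ∂μ = ∫ ω, u ω ^ 2 ∂μ :=
    integral_congr_ae (Filter.Eventually.of_forall fun ω => Real.rpow_two (u ω))
  have e2 : ∫ ω, v ω ^ (2:ℝ) ∂μ = ∫ ω, v ω ^ 2 ∂μ :=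
    integral_congr_ae (Filter.Eventually.of_forall fun ω => Real.rpow_two (v ω))
  rw [e1, e2] at h
  refine h.trans (le_of_eq ?_)
  rw [Real.sqrt_eq_rpow, Real.sqrt_eq_rpow]
lemma cs_abs {Ω : Type} [MeasurableSpace Ω] (μ : Measure Ω) [IsProbabilityMeasure μ]
    (w : Ω → ℝ) (hw : Measurable w) (h2 : Integrable (fun ω => w ω ^ 2) μ) :
    ∫ ω, |w ω| ∂μ ≤ Real.sqrt (∫ ω, w ω ^ 2 ∂μ) := by
  have h2' : Integrable (fun ω => |w ω| ^ 2) μ :=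
    h2.congr (Filter.Eventually.of_forall fun ω => (sq_abs (w ω)).symm)
  have h := my_cs μ (fun ω => |w ω|) (fun _ => 1) (fun ω => abs_nonneg _)
    (fun _ => zero_le_one) hw.abs.aestronglyMeasurable aestronglyMeasurable_const
    h2' (by simpa using (integrable_const (1:ℝ)))
  have e1 : ∫ ω, |w ω| * 1 ∂μ = ∫ ω, |w ω| ∂μ := by simp
  have e2 : ∫ ω, |w ω| ^ 2 ∂μ = ∫ ω, w ω ^ 2 ∂μ :=
    integral_congr_ae (Filter.Eventually.of_forall fun ω => sq_abs (w ω))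
  have e3 : ∫ _ω, (1:ℝ) ^ 2 ∂μ = 1 := by simp
  rw [e1, e2, e3, Real.sqrt_one, mul_one] at h
  exact h

lemma cs_mix {Ω : Type} [MeasurableSpace Ω] (μ : Measure Ω)
    (k w : Ω → ℝ) (hk : Measurable k) (hw : Measurable w)
    (hE : Integrable (fun ω => Real.exp (2 * k ω)) μ)
    (h2 : Integrable (fun ω => w ω ^ 2) μ) :
    ∫ ω, Real.exp (k ω) * |w ω| ∂μ
      ≤ Real.sqrt (∫ ω, Real.exp (2 * k ω) ∂μ) * Real.sqrt (∫ ω, w ω ^ 2 ∂μ) := by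
  have hexp_sq : ∀ ω, Real.exp (k ω) ^ 2 = Real.exp (2 * k ω) := fun ω => by
    rw [two_mul, Real.exp_add, sq]
  have h2' : Integrable (fun ω => |w ω| ^ 2) μ :=
    h2.congr (Filter.Eventually.of_forall fun ω => (sq_abs (w ω)).symm)
  have hE' : Integrable (fun ω => Real.exp (k ω) ^ 2) μ :=
    hE.congr (Filter.Eventually.of_forall fun ω => (hexp_sq ω).symm)
  have h := my_cs μ (fun ω => Real.exp (k ω)) (fun ω => |w ω|)
    (fun ω => (Real.exp_pos _).le) (fun ω => abs_nonneg _)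
    (Real.measurable_exp.comp hk).aestronglyMeasurable hw.abs.aestronglyMeasurable hE' h2'
  have e1 : ∫ ω, Real.exp (k ω) ^ 2 ∂μ = ∫ ω, Real.exp (2 * k ω) ∂μ :=
    integral_congr_ae (Filter.Eventually.of_forall fun ω => hexp_sq ω)
  have e2 : ∫ ω, |w ω| ^ 2 ∂μ = ∫ ω, w ω ^ 2 ∂μ :=
    integral_congr_ae (Filter.Eventually.of_forall fun ω => sq_abs (w ω))
  rw [e1, e2] at h
  exact h
lemma pointwise_bd {phat pcheck p01 L : ℝ}
    (h1 : 0 < phat) (h2 : phat ≤ pcheck) (h3 : pcheck < 1)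
    (hp01 : p01 ∈ Set.Ioo (0:ℝ) 1) (hL : 0 < L)
    {f : ℝ → ℝ} (hf0 : ∀ x, 0 ≤ f x) (hfL : ∀ x y, |f x - f y| ≤ L * |x - y|)
    {p : ℝ} (hp : p ∈ Set.Icc phat pcheck) (z : ℝ) :
    0 ≤ f (p * Real.exp (-z) / (1 + p * (-1 + Real.exp (-z)))) *
        (Real.exp (-z) / (1 + p * (-1 + Real.exp (-z)))^2) ∧
    f (p * Real.exp (-z) / (1 + p * (-1 + Real.exp (-z)))) *
        (Real.exp (-z) / (1 + p * (-1 + Real.exp (-z)))^2)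
      ≤ (L * (1 + p01) + f p01) * (1 / (4 * phat * (1 - pcheck))) := by
  obtain ⟨hpl, hpr⟩ := hp
  have hp0 : 0 < p := lt_of_lt_of_le h1 hpl
  have hp1 : p < 1 := lt_of_le_of_lt hpr h3
  have hu := Real.exp_pos (-z)
  have hd := dpos hp0 hp1 z
  have hG0 : 0 ≤ Real.exp (-z) / (1 + p * (-1 + Real.exp (-z)))^2 := by positivity
  have hH := h_mem hp0 hp1 z
  obtain ⟨ha, hb⟩ := hH
  obtain ⟨hc, hd'⟩ := hp01
  constructor
  · exact mul_nonneg (hf0 _) hG0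
  · have hfb : f (p * Real.exp (-z) / (1 + p * (-1 + Real.exp (-z)))) ≤ f p01 + L * (1 + p01) := by
      have habs : |p * Real.exp (-z) / (1 + p * (-1 + Real.exp (-z))) - p01| ≤ 1 + p01 := by
        rw [abs_le]; constructor <;> nlinarith
      have hstep : f (p * Real.exp (-z) / (1 + p * (-1 + Real.exp (-z)))) - f p01
          ≤ L * (1 + p01) := by
        calc f (p * Real.exp (-z) / (1 + p * (-1 + Real.exp (-z)))) - f p01
            ≤ |f (p * Real.exp (-z) / (1 + p * (-1 + Real.exp (-z)))) - f p01| := le_abs_self _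
          _ ≤ L * |p * Real.exp (-z) / (1 + p * (-1 + Real.exp (-z))) - p01| := hfL _ _
          _ ≤ L * (1 + p01) := mul_le_mul_of_nonneg_left habs hL.le
      linarith
    have hGb : Real.exp (-z) / (1 + p * (-1 + Real.exp (-z)))^2
        ≤ 1 / (4 * phat * (1 - pcheck)) := by
      calc Real.exp (-z) / (1 + p * (-1 + Real.exp (-z)))^2 ≤ 1 / (4*p*(1-p)) :=
            g_le hp0 hp1 z
        _ ≤ 1 / (4 * phat * (1 - pcheck)) := by
            have hq : (0:ℝ) < 4 * phat * (1 - pcheck) := by nlinarith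
            apply one_div_le_one_div_of_le hq
            nlinarith
    calc f (p * Real.exp (-z) / (1 + p * (-1 + Real.exp (-z)))) *
          (Real.exp (-z) / (1 + p * (-1 + Real.exp (-z)))^2)
        ≤ (f p01 + L * (1 + p01)) * (1 / (4 * phat * (1 - pcheck))) := by
          apply mul_le_mul hfb hGb hG0 (by nlinarith [hf0 p01])
      _ = (L * (1 + p01) + f p01) * (1 / (4 * phat * (1 - pcheck))) := by ring
theorem pdf_difference_estimate
    (phat pcheck p01 L : ℝ)
    (h1 : 0 < phat) (h2 : phat ≤ pcheck) (h3 : pcheck < 1)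
    (hp01 : p01 ∈ Set.Ioo (0:ℝ) 1) (hL : 0 < L) :
    ∃ Cg > 0, ∃ Ch > 0,
      ∀ (Ω : Type) (_ : MeasurableSpace Ω) (ℙ : Measure Ω),
        IsProbabilityMeasure ℙ →
      ∀ (K K' : Ω → ℝ), Measurable K → Measurable K' →
        Integrable (fun ω => (K ω - K' ω)^2) ℙ →
        Integrable (fun ω => Real.exp (2 * K' ω)) ℙ →
      ∀ (f : ℝ → ℝ), (∀ x, 0 ≤ f x) → (∀ x y, |f x - f y| ≤ L * |x - y|) →
      ∀ p ∈ Set.Icc phat pcheck,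
        |(∫ ω, f (p * Real.exp (-(K ω)) / (1 + p * (-1 + Real.exp (-(K ω))))) *
              (Real.exp (-(K ω)) / (1 + p * (-1 + Real.exp (-(K ω))))^2) ∂ℙ) -
         (∫ ω, f (p * Real.exp (-(K' ω)) / (1 + p * (-1 + Real.exp (-(K' ω))))) *
              (Real.exp (-(K' ω)) / (1 + p * (-1 + Real.exp (-(K' ω))))^2) ∂ℙ)| ≤
        ((L * (1 + p01) + f p01) * Cg +
            (L * Ch / phat^2) * Real.sqrt (∫ ω, Real.exp (2 * K' ω) ∂ℙ)) *
          Real.sqrt (∫ ω, (K ω - K' ω)^2 ∂ℙ) := by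
  have hCgpos : (0:ℝ) < 1 / (4 * phat * (1 - pcheck)) := by
    have : (0:ℝ) < 4 * phat * (1 - pcheck) := by nlinarith
    positivity
  refine ⟨1 / (4 * phat * (1 - pcheck)), hCgpos, 1, one_pos, ?_⟩
  intro Ω mΩ ℙ hprob K K' hKm hK'm hKK2 hE2 f hf0 hfL p hp
  obtain ⟨hc01, hd01⟩ := hp01
  set Cg : ℝ := 1 / (4 * phat * (1 - pcheck)) with hCg_def
  set A : ℝ := (L * (1 + p01) + f p01) * Cg with hA_def
  set B : ℝ := L / phat ^ 2 with hB_def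
  have hA0 : 0 ≤ A := by
    have := hf0 p01
    apply mul_nonneg _ hCgpos.le
    nlinarith
  have hB0 : 0 ≤ B := by positivity
  -- the integrand as a function of z
  set F : ℝ → ℝ := fun z => f (p * Real.exp (-z) / (1 + p * (-1 + Real.exp (-z)))) *
      (Real.exp (-z) / (1 + p * (-1 + Real.exp (-z)))^2) with hF_def
  have hfc : Continuous f := by
    have hlip : LipschitzWith (Real.toNNReal L) f := by
      apply LipschitzWith.of_dist_le_mul
      intro x y
      rw [Real.dist_eq, Real.dist_eq, Real.coe_toNNReal _ hL.le]
      exact hfL x y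
    exact hlip.continuous
  have hFm : Measurable F := by
    apply Measurable.mul
    · exact hfc.measurable.comp
        ((measurable_const.mul (Real.measurable_exp.comp measurable_neg)).div
          (measurable_const.add (measurable_const.mul
            (measurable_const.add (Real.measurable_exp.comp measurable_neg)))))
    · exact (Real.measurable_exp.comp measurable_neg).div
        ((measurable_const.add (measurable_const.mul
          (measurable_const.add (Real.measurable_exp.comp measurable_neg)))).pow measurable_const)
  have hbd := fun z => pointwise_bd h1 h2 h3 ⟨hc01, hd01⟩ hL hf0 hfL hp z
  have hFK : Integrable (fun ω => F (K ω)) ℙ := by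
    refine Integrable.mono' (integrable_const ((L * (1 + p01) + f p01) * Cg))
      (hFm.comp hKm).aestronglyMeasurable (Filter.Eventually.of_forall fun ω => ?_)
    rw [Real.norm_eq_abs, abs_of_nonneg (hbd (K ω)).1]
    exact (hbd (K ω)).2
  have hFK' : Integrable (fun ω => F (K' ω)) ℙ := by
    refine Integrable.mono' (integrable_const ((L * (1 + p01) + f p01) * Cg))
      (hFm.comp hK'm).aestronglyMeasurable (Filter.Eventually.of_forall fun ω => ?_)
    rw [Real.norm_eq_abs, abs_of_nonneg (hbd (K' ω)).1]
    exact (hbd (K' ω)).2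
  have habs_int : Integrable (fun ω => |K ω - K' ω|) ℙ := by
    refine Integrable.mono' (((integrable_const (1:ℝ)).add hKK2).div_const 2)
      (hKm.sub hK'm).abs.aestronglyMeasurable (Filter.Eventually.of_forall fun ω => ?_)
    rw [Real.norm_eq_abs, abs_abs]
    simp only [Pi.add_apply]
    nlinarith [sq_nonneg (|K ω - K' ω| - 1), sq_abs (K ω - K' ω)]
  have hmix_int : Integrable (fun ω => Real.exp (K' ω) * |K ω - K' ω|) ℙ := by
    refine Integrable.mono' ((hE2.add hKK2).div_const 2)
      ((Real.measurable_exp.comp hK'm).mul (hKm.sub hK'm).abs).aestronglyMeasurable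
      (Filter.Eventually.of_forall fun ω => ?_)
    rw [Real.norm_eq_abs, abs_of_nonneg (mul_nonneg (Real.exp_pos _).le (abs_nonneg _))]
    have he : Real.exp (2 * K' ω) = Real.exp (K' ω) ^ 2 := by
      rw [two_mul, Real.exp_add, sq]
    simp only [Pi.add_apply]
    nlinarith [sq_nonneg (Real.exp (K' ω) - |K ω - K' ω|), sq_abs (K ω - K' ω)]
  have hdom_int : Integrable
      (fun ω => A * |K ω - K' ω| + B * (Real.exp (K' ω) * |K ω - K' ω|)) ℙ :=
    (habs_int.const_mul A).add (hmix_int.const_mul B)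
  have hptw : ∀ ω, |F (K ω) - F (K' ω)|
      ≤ A * |K ω - K' ω| + B * (Real.exp (K' ω) * |K ω - K' ω|) := by
    intro ω
    have := pointwise_est h1 h2 h3 ⟨hc01, hd01⟩ hL hf0 hfL hp (K ω) (K' ω)
    calc |F (K ω) - F (K' ω)|
        ≤ ((L * (1 + p01) + f p01) * (1 / (4 * phat * (1 - pcheck)))
            + (L / phat^2) * Real.exp (K' ω)) * |K ω - K' ω| := this
      _ = A * |K ω - K' ω| + B * (Real.exp (K' ω) * |K ω - K' ω|) := by
          rw [hA_def, hB_def, hCg_def]; ring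
  have step1 : |(∫ ω, F (K ω) ∂ℙ) - (∫ ω, F (K' ω) ∂ℙ)|
      ≤ A * (∫ ω, |K ω - K' ω| ∂ℙ) + B * (∫ ω, Real.exp (K' ω) * |K ω - K' ω| ∂ℙ) := by
    rw [← integral_sub hFK hFK']
    calc |∫ ω, (F (K ω) - F (K' ω)) ∂ℙ| ≤ ∫ ω, |F (K ω) - F (K' ω)| ∂ℙ := by
          have := norm_integral_le_integral_norm (μ := ℙ) (fun ω => F (K ω) - F (K' ω))
          simpa [Real.norm_eq_abs] using this
      _ ≤ ∫ ω, (A * |K ω - K' ω| + B * (Real.exp (K' ω) * |K ω - K' ω|)) ∂ℙ := by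
          refine integral_mono ((hFK.sub hFK').abs) hdom_int ?_
          intro ω; exact hptw ω
      _ = A * (∫ ω, |K ω - K' ω| ∂ℙ) + B * (∫ ω, Real.exp (K' ω) * |K ω - K' ω| ∂ℙ) := by
          rw [integral_add (habs_int.const_mul A) (hmix_int.const_mul B),
            integral_const_mul, integral_const_mul]
  have hcs1 : ∫ ω, |K ω - K' ω| ∂ℙ ≤ Real.sqrt (∫ ω, (K ω - K' ω)^2 ∂ℙ) :=
    cs_abs ℙ (fun ω => K ω - K' ω) (hKm.sub hK'm) hKK2
  have hcs2 : ∫ ω, Real.exp (K' ω) * |K ω - K' ω| ∂ℙ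
      ≤ Real.sqrt (∫ ω, Real.exp (2 * K' ω) ∂ℙ) * Real.sqrt (∫ ω, (K ω - K' ω)^2 ∂ℙ) :=
    cs_mix ℙ K' (fun ω => K ω - K' ω) hK'm (hKm.sub hK'm) hE2 hKK2
  have final : |(∫ ω, F (K ω) ∂ℙ) - (∫ ω, F (K' ω) ∂ℙ)|
      ≤ ((L * (1 + p01) + f p01) * Cg +
          (L * 1 / phat^2) * Real.sqrt (∫ ω, Real.exp (2 * K' ω) ∂ℙ)) *
        Real.sqrt (∫ ω, (K ω - K' ω)^2 ∂ℙ) := by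
    have t1 : A * (∫ ω, |K ω - K' ω| ∂ℙ) ≤ A * Real.sqrt (∫ ω, (K ω - K' ω)^2 ∂ℙ) :=
      mul_le_mul_of_nonneg_left hcs1 hA0
    have t2 : B * (∫ ω, Real.exp (K' ω) * |K ω - K' ω| ∂ℙ)
        ≤ B * (Real.sqrt (∫ ω, Real.exp (2 * K' ω) ∂ℙ) *
            Real.sqrt (∫ ω, (K ω - K' ω)^2 ∂ℙ)) :=
      mul_le_mul_of_nonneg_left hcs2 hB0
    calc |(∫ ω, F (K ω) ∂ℙ) - (∫ ω, F (K' ω) ∂ℙ)|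
        ≤ A * (∫ ω, |K ω - K' ω| ∂ℙ)
          + B * (∫ ω, Real.exp (K' ω) * |K ω - K' ω| ∂ℙ) := step1
      _ ≤ A * Real.sqrt (∫ ω, (K ω - K' ω)^2 ∂ℙ)
          + B * (Real.sqrt (∫ ω, Real.exp (2 * K' ω) ∂ℙ) *
              Real.sqrt (∫ ω, (K ω - K' ω)^2 ∂ℙ)) := add_le_add t1 t2
      _ = ((L * (1 + p01) + f p01) * Cg +
            (L * 1 / phat^2) * Real.sqrt (∫ ω, Real.exp (2 * K' ω) ∂ℙ)) *
          Real.sqrt (∫ ω, (K ω - K' ω)^2 ∂ℙ) := by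
          rw [hA_def, hB_def]; ring
  exact final
end

section
/- Let (Ω, ℱ, ℙ) be a probability space, t₀ < T, and let A and A_N (N ≥ 1) be jointly measurable functions [t₀,T] × Ω → ℝ, square-integrable on Ω × [t₀,T], such that ∫_{t₀}^{T} E[(A_N(s,·) − A(s,·))²] ds → 0 as N → ∞. Define K_N(t,ω) = ∫_{t₀}^{t} A_N(s,ω) ds. Assume there exists C > 0 with E[e^{2K_N(t,·)}] ≤ C for all N ≥ 1 and all t ∈ [t₀,T]. Let f : ℝ → [0,∞) be Lipschitz continuous and let 0 < p̂ ≤ p̌ < 1. Define f₁^N(p,t) = E[f(h(p,K_N(t,·)))·g(p,K_N(t,·))]. Then for every p ∈ [p̂,p̌] and every t ∈ [t₀,T], the sequence (f₁^N(p,t))_{N≥1} converges in ℝ as N → ∞. -/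
open MeasureTheory Filter

lemma phi_lipschitz (p L : ℝ) (f : ℝ → ℝ) (hf0 : ∀ x, 0 ≤ f x)
    (hL0 : 0 ≤ L) (hL : ∀ x y, |f x - f y| ≤ L * |x - y|)
    (hp1 : 0 < p) (hp2 : p < 1) :
    ∃ M : ℝ, 0 ≤ M ∧ ∀ z w : ℝ,
      |f (p * Real.exp (-z) / (1 + p * (-1 + Real.exp (-z)))) *
          (Real.exp (-z) / (1 + p * (-1 + Real.exp (-z)))^2) -
        f (p * Real.exp (-w) / (1 + p * (-1 + Real.exp (-w)))) *
          (Real.exp (-w) / (1 + p * (-1 + Real.exp (-w)))^2)| ≤ M * |z - w| := by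
  set d : ℝ → ℝ := fun z => 1 + p * (-1 + Real.exp (-z)) with hd
  set hf : ℝ → ℝ := fun z => p * Real.exp (-z) / d z with hhf
  set gf : ℝ → ℝ := fun z => Real.exp (-z) / (d z) ^ 2 with hgf
  clear_value d hf gf
  have hdpos : ∀ z, 0 < d z := by
    intro z; have := Real.exp_pos (-z); simp only [hd]; nlinarith
  have hdsq : ∀ z, 4 * p * (1 - p) * Real.exp (-z) ≤ (d z) ^ 2 := by
    intro z; have := Real.exp_pos (-z); simp only [hd]
    nlinarith [sq_nonneg ((1 - p) - p * Real.exp (-z))]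
  have hB : (0:ℝ) < 1 / (4 * p * (1 - p)) := by
    have : (0:ℝ) < 4 * p * (1 - p) := by nlinarith
    positivity
  have hde : ∀ z : ℝ, HasDerivAt (fun z : ℝ => Real.exp (-z)) (-Real.exp (-z)) z := by
    intro z
    simpa using (hasDerivAt_neg z).exp
  have hdd : ∀ z : ℝ, HasDerivAt d (-(p * Real.exp (-z))) z := by
    intro z
    simpa [hd, mul_neg] using (((hde z).const_add (-1)).const_mul p).const_add 1
  -- derivative of hf
  have hh' : ∀ z : ℝ, HasDerivAt hf (-(p * (1 - p) * Real.exp (-z)) / (d z) ^ 2) z := by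
    intro z
    have h0 := ((hde z).const_mul p).div (hdd z) (hdpos z).ne'
    rw [hhf]
    refine h0.congr_deriv ?_
    have hdz : d z = (1 - p) + p * Real.exp (-z) := by simp only [hd]; ring
    rw [hdz]; ring
  -- derivative of gf
  have hg' : ∀ z : ℝ, HasDerivAt gf
      ((-Real.exp (-z) * (d z) ^ 2 - Real.exp (-z) * ((2:ℕ) * d z ^ 1 * -(p * Real.exp (-z)))) /
        ((d z) ^ 2) ^ 2) z := by
    intro z
    rw [hgf]
    exact (hde z).div ((hdd z).pow 2) (pow_ne_zero 2 (hdpos z).ne')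
  -- bounds on derivatives
  have hhb : ∀ z : ℝ, ‖-(p * (1 - p) * Real.exp (-z)) / (d z) ^ 2‖ ≤ 1 / 4 := by
    intro z
    have he := Real.exp_pos (-z)
    have hD : (0:ℝ) < (d z) ^ 2 := pow_pos (hdpos z) 2
    have hnp : (0:ℝ) < p * (1 - p) * Real.exp (-z) :=
      mul_pos (mul_pos hp1 (by linarith)) he
    rw [Real.norm_eq_abs, abs_div, abs_neg, abs_of_pos hnp, abs_of_pos hD, div_le_iff₀ hD]
    nlinarith [hdsq z]
  have hgb : ∀ z : ℝ, ‖(-Real.exp (-z) * (d z) ^ 2 - Real.exp (-z) * ((2:ℕ) * d z ^ 1 * -(p * Real.exp (-z)))) /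
        ((d z) ^ 2) ^ 2‖ ≤ 1 / (4 * p * (1 - p)) := by
    intro z
    have he : (0:ℝ) < Real.exp (-z) := Real.exp_pos _
    have hD : (0:ℝ) < d z := hdpos z
    have hpe : p * Real.exp (-z) ≤ d z := by simp only [hd]; nlinarith
    have hnum : |(-Real.exp (-z) * (d z) ^ 2 - Real.exp (-z) * ((2:ℕ) * d z ^ 1 * -(p * Real.exp (-z))))|
        ≤ Real.exp (-z) * (d z) ^ 2 := by
      rw [abs_le]
      constructor <;> push_cast <;> nlinarith [mul_pos (mul_pos (mul_pos hp1 hD) he) he, mul_pos he (mul_pos hD hD)]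
    rw [Real.norm_eq_abs, abs_div, abs_of_pos (by positivity : (0:ℝ) < ((d z) ^ 2) ^ 2)]
    calc |(-Real.exp (-z) * (d z) ^ 2 - Real.exp (-z) * ((2:ℕ) * d z ^ 1 * -(p * Real.exp (-z))))| / ((d z) ^ 2) ^ 2
        ≤ (Real.exp (-z) * (d z) ^ 2) / ((d z) ^ 2) ^ 2 := by gcongr
      _ ≤ 1 / (4 * p * (1 - p)) := by
          rw [div_le_div_iff₀ (by positivity) (by nlinarith : (0:ℝ) < 4 * p * (1 - p))]
          nlinarith [mul_le_mul_of_nonneg_right (hdsq z) (sq_nonneg (d z))]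
  -- Lipschitz estimates via MVT
  have hlh : ∀ z w : ℝ, |hf z - hf w| ≤ (1 / 4) * |z - w| := by
    intro z w
    have := Convex.norm_image_sub_le_of_norm_hasDerivWithin_le
      (f := hf) (f' := fun z => -(p * (1 - p) * Real.exp (-z)) / (d z) ^ 2)
      (s := Set.univ) (fun x _ => (hh' x).hasDerivWithinAt) (fun x _ => hhb x)
      convex_univ (Set.mem_univ w) (Set.mem_univ z)
    simpa [Real.norm_eq_abs] using this
  have hlg : ∀ z w : ℝ, |gf z - gf w| ≤ (1 / (4 * p * (1 - p))) * |z - w| := by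
    intro z w
    have := Convex.norm_image_sub_le_of_norm_hasDerivWithin_le
      (f := gf) (f' := fun z => (-Real.exp (-z) * (d z) ^ 2 -
        Real.exp (-z) * ((2:ℕ) * d z ^ 1 * -(p * Real.exp (-z)))) / ((d z) ^ 2) ^ 2)
      (s := Set.univ) (fun x _ => (hg' x).hasDerivWithinAt) (fun x _ => hgb x)
      convex_univ (Set.mem_univ w) (Set.mem_univ z)
    simpa [Real.norm_eq_abs] using this
  -- bounds on the functions
  have hhub : ∀ z, hf z ≤ 1 := by
    intro z
    have hD := hdpos z
    simp only [hhf]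
    rw [div_le_one hD]
    simp only [hd]; nlinarith [Real.exp_pos (-z)]
  have hhlb : ∀ z, 0 ≤ hf z := by
    intro z; simp only [hhf]
    exact div_nonneg (by positivity) (hdpos z).le
  have hgub : ∀ z, gf z ≤ 1 / (4 * p * (1 - p)) := by
    intro z
    have hD := hdpos z
    simp only [hgf]
    rw [div_le_div_iff₀ (by positivity) (by nlinarith : (0:ℝ) < 4 * p * (1 - p))]
    nlinarith [hdsq z]
  have hglb : ∀ z, 0 ≤ gf z := by
    intro z; simp only [hgf]
    exact div_nonneg (Real.exp_pos _).le (by positivity)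
  have hfub : ∀ z, f (hf z) ≤ f 0 + L := by
    intro z
    have h1 := hL (hf z) 0
    have h2 : |hf z - 0| ≤ 1 := by
      rw [sub_zero, abs_of_nonneg (hhlb z)]; exact hhub z
    have h3 : f (hf z) - f 0 ≤ |f (hf z) - f 0| := le_abs_self _
    nlinarith [abs_nonneg (hf z - 0)]
  refine ⟨(f 0 + L) * (1 / (4 * p * (1 - p))) + (L * (1 / 4)) * (1 / (4 * p * (1 - p))),
    by nlinarith [hf0 0], fun z w => ?_⟩
  have key : f (hf z) * gf z - f (hf w) * gf w
      = f (hf z) * (gf z - gf w) + (f (hf z) - f (hf w)) * gf w := by ring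
  have t1 : |f (hf z)| * |gf z - gf w| ≤ (f 0 + L) * ((1 / (4 * p * (1 - p))) * |z - w|) := by
    apply mul_le_mul _ (hlg z w) (abs_nonneg _) (by nlinarith [hf0 0])
    rw [abs_of_nonneg (hf0 _)]; exact hfub z
  have t2 : |f (hf z) - f (hf w)| * |gf w| ≤ (L * ((1 / 4) * |z - w|)) * (1 / (4 * p * (1 - p))) := by
    apply mul_le_mul _ _ (abs_nonneg _) (by positivity)
    · exact (hL _ _).trans (by nlinarith [hlh z w, abs_nonneg (hf z - hf w)])
    · rw [abs_of_nonneg (hglb w)]; exact hgub w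
  have main : |f (hf z) * gf z - f (hf w) * gf w| ≤
      ((f 0 + L) * (1 / (4 * p * (1 - p))) + (L * (1 / 4)) * (1 / (4 * p * (1 - p)))) * |z - w| := by
    calc |f (hf z) * gf z - f (hf w) * gf w|
        ≤ |f (hf z)| * |gf z - gf w| + |f (hf z) - f (hf w)| * |gf w| := by
          rw [key]
          exact (abs_add_le _ _).trans (le_of_eq (by rw [abs_mul, abs_mul]))
      _ ≤ (f 0 + L) * ((1 / (4 * p * (1 - p))) * |z - w|)
          + (L * ((1 / 4) * |z - w|)) * (1 / (4 * p * (1 - p))) := add_le_add t1 t2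
      _ = ((f 0 + L) * (1 / (4 * p * (1 - p))) + (L * (1 / 4)) * (1 / (4 * p * (1 - p)))) * |z - w| := by
          ring
  simpa only [hhf, hgf, hd] using main
lemma pdf_arith1 (a b e : ℝ) (ha : a ≠ 0) (hb : b ≠ 0) : a * ((e/(2*a*b))/2) * b = e/4 := by
  field_simp
  ring

lemma pdf_arith2 (a c' e : ℝ) (ha : a ≠ 0) (hc' : c' ≠ 0) :
    a * (1/(2*c')) * (2*(c'*e/(8*a)) + 2*(c'*e/(8*a))) = e/4 := by
  field_simp
  ring

set_option maxHeartbeats 2000000 in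
theorem pdf_truncations_converge
    {Ω : Type*} [MeasurableSpace Ω] (ℙ : Measure Ω) [IsProbabilityMeasure ℙ]
    (t₀ T : ℝ) (hT : t₀ < T)
    (A : ℝ → Ω → ℝ) (AN : ℕ → ℝ → Ω → ℝ)
    (hAmeas : Measurable (Function.uncurry A))
    (hANmeas : ∀ N, Measurable (Function.uncurry (AN N)))
    (hAint : Integrable (fun q : ℝ × Ω => (A q.1 q.2)^2)
      ((volume.restrict (Set.Icc t₀ T)).prod ℙ))
    (hANint : ∀ N, Integrable (fun q : ℝ × Ω => (AN N q.1 q.2)^2)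
      ((volume.restrict (Set.Icc t₀ T)).prod ℙ))
    (hconv : Tendsto (fun N => ∫ s in t₀..T, (∫ ω, (AN N s ω - A s ω)^2 ∂ℙ))
      atTop (nhds 0))
    (C : ℝ) (hC : 0 < C)
    (hmom : ∀ N : ℕ, 1 ≤ N → ∀ t ∈ Set.Icc t₀ T,
      (∫ ω, Real.exp (2 * ∫ s in t₀..t, AN N s ω) ∂ℙ) ≤ C)
    (f : ℝ → ℝ) (hf0 : ∀ x, 0 ≤ f x)
    (L : ℝ) (hL : ∀ x y, |f x - f y| ≤ L * |x - y|)
    (phat pcheck : ℝ) (h1 : 0 < phat) (h2 : phat ≤ pcheck) (h3 : pcheck < 1) :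
    ∀ p ∈ Set.Icc phat pcheck, ∀ t ∈ Set.Icc t₀ T,
      ∃ l : ℝ, Tendsto (fun N : ℕ =>
          ∫ ω, f (p * Real.exp (-(∫ s in t₀..t, AN N s ω)) /
                (1 + p * (-1 + Real.exp (-(∫ s in t₀..t, AN N s ω))))) *
              (Real.exp (-(∫ s in t₀..t, AN N s ω)) /
                (1 + p * (-1 + Real.exp (-(∫ s in t₀..t, AN N s ω))))^2) ∂ℙ)
        atTop (nhds l) := by
  have hL0 : 0 ≤ L := by
    have h := hL 1 0
    simp only [sub_zero, abs_one, mul_one] at h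
    exact le_trans (abs_nonneg _) h
  intro p hp t ht
  have hp1 : 0 < p := lt_of_lt_of_le h1 hp.1
  have hp2 : p < 1 := lt_of_le_of_lt hp.2 h3
  have htl : t₀ ≤ t := ht.1
  have htr : t ≤ T := ht.2
  obtain ⟨M, hM0, hMlip⟩ := phi_lipschitz p L f hf0 hL0 hL hp1 hp2
  set Φ : ℝ → ℝ := fun z =>
    f (p * Real.exp (-z) / (1 + p * (-1 + Real.exp (-z)))) *
      (Real.exp (-z) / (1 + p * (-1 + Real.exp (-z)))^2) with hΦ
  have hΦlip : ∀ z w : ℝ, |Φ z - Φ w| ≤ M * |z - w| := hMlip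
  set μ := (volume.restrict (Set.Icc t₀ T)).prod ℙ with hμ
  haveI : IsFiniteMeasure (volume.restrict (Set.Icc t₀ T)) := ⟨by
    rw [Measure.restrict_apply_univ, Real.volume_Icc]; exact ENNReal.ofReal_lt_top⟩
  have hμuniv : (μ Set.univ).toReal = T - t₀ := by
    rw [hμ, ← Set.univ_prod_univ, Measure.prod_prod, Measure.restrict_apply_univ,
      Real.volume_Icc, measure_univ, mul_one, ENNReal.toReal_ofReal (by linarith)]
  -- L¹ integrability of the AN on the product
  have intAN1 : ∀ N, Integrable (fun q : ℝ × Ω => AN N q.1 q.2) μ := by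
    intro N
    refine Integrable.mono' (((hANint N).const_mul (1/2)).add (integrable_const (1/2)))
      (hANmeas N).aestronglyMeasurable ?_
    filter_upwards with q
    rw [Real.norm_eq_abs]
    simp only [Pi.add_apply]
    nlinarith [sq_nonneg (|AN N q.1 q.2| - 1), sq_abs (AN N q.1 q.2)]
  have slice : ∀ N, ∀ᵐ ω ∂ℙ, IntegrableOn (fun s => AN N s ω) (Set.Icc t₀ T) volume := by
    intro N
    exact (intAN1 N).prod_left_ae
  set K : ℕ → Ω → ℝ := fun N ω => ∫ s in t₀..t, AN N s ω with hK
  have hsub : Set.Ioc t₀ t ⊆ Set.Icc t₀ T := fun s hs => ⟨le_of_lt hs.1, hs.2.trans htr⟩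
  have measK : ∀ N, StronglyMeasurable (K N) := by
    intro N
    have e : K N = fun ω => ∫ s, AN N s ω ∂(volume.restrict (Set.Ioc t₀ t)) := by
      funext ω
      simp only [hK]
      exact intervalIntegral.integral_of_le htl
    rw [e]
    exact StronglyMeasurable.integral_prod_left ((hANmeas N).stronglyMeasurable)
  have Kbound : ∀ N, ∀ᵐ ω ∂ℙ, |K N ω| ≤ ∫ s in Set.Icc t₀ T, |AN N s ω| := by
    intro N
    filter_upwards [slice N] with ω hω
    have e1 : K N ω = ∫ s in Set.Ioc t₀ t, AN N s ω := by
      simp only [hK]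
      exact intervalIntegral.integral_of_le htl
    rw [e1]
    calc |∫ s in Set.Ioc t₀ t, AN N s ω|
        ≤ ∫ s in Set.Ioc t₀ t, |AN N s ω| := by
          simpa [Real.norm_eq_abs] using
            norm_integral_le_integral_norm (μ := volume.restrict (Set.Ioc t₀ t)) (fun s => AN N s ω)
      _ ≤ ∫ s in Set.Icc t₀ T, |AN N s ω| :=
          setIntegral_mono_set hω.abs (Filter.Eventually.of_forall fun s => abs_nonneg _)
            (HasSubset.Subset.eventuallyLE hsub)
  have intAbsInt : ∀ N, Integrable (fun ω => ∫ s in Set.Icc t₀ T, |AN N s ω|) ℙ := by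
    intro N
    simpa [Real.norm_eq_abs] using (intAN1 N).integral_norm_prod_right
  have intK : ∀ N, Integrable (K N) ℙ := by
    intro N
    exact Integrable.mono' (intAbsInt N) (measK N).aestronglyMeasurable
      (by filter_upwards [Kbound N] with ω h using by rwa [Real.norm_eq_abs])
  have hΦcont : Continuous Φ := by
    have hlw : LipschitzWith (Real.toNNReal M) Φ := by
      apply LipschitzWith.of_dist_le_mul
      intro x y
      rw [Real.dist_eq, Real.dist_eq, Real.coe_toNNReal M hM0]
      exact hΦlip x y
    exact hlw.continuous
  have intΦK : ∀ N, Integrable (fun ω => Φ (K N ω)) ℙ := by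
    intro N
    refine Integrable.mono' ((integrable_const |Φ 0|).add ((intK N).abs.const_mul M))
      (hΦcont.comp_stronglyMeasurable (measK N)).aestronglyMeasurable ?_
    filter_upwards with ω
    rw [Real.norm_eq_abs]
    have h := hΦlip (K N ω) 0
    simp only [sub_zero] at h
    have h2 := abs_sub_abs_le_abs_sub (Φ (K N ω)) (Φ 0)
    simp only [Pi.add_apply]
    linarith
  set r : ℕ → ℝ := fun N => ∫ s in t₀..T, ∫ ω, (AN N s ω - A s ω)^2 ∂ℙ with hr
  have intDiffSq : ∀ N, Integrable (fun q : ℝ × Ω => (AN N q.1 q.2 - A q.1 q.2)^2) μ := by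
    intro N
    refine Integrable.mono' (((hANint N).const_mul 2).add (hAint.const_mul 2))
      (((hANmeas N).sub hAmeas).pow_const 2).aestronglyMeasurable ?_
    filter_upwards with q
    rw [Real.norm_eq_abs, abs_of_nonneg (sq_nonneg _)]
    simp only [Pi.add_apply]
    nlinarith [sq_nonneg (AN N q.1 q.2 + A q.1 q.2)]
  have hr_eq : ∀ N, r N = ∫ q, (AN N q.1 q.2 - A q.1 q.2)^2 ∂μ := by
    intro N
    simp only [hr]
    rw [intervalIntegral.integral_of_le (le_of_lt hT), ← MeasureTheory.integral_Icc_eq_integral_Ioc]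
    exact MeasureTheory.integral_integral (intDiffSq N)
  have hr_nonneg : ∀ N, 0 ≤ r N := by
    intro N
    rw [hr_eq N]
    exact integral_nonneg fun q => sq_nonneg _
  have intD2 : ∀ N M', Integrable (fun q : ℝ × Ω => (AN N q.1 q.2 - AN M' q.1 q.2)^2) μ := by
    intro N M'
    refine Integrable.mono' (((hANint N).const_mul 2).add ((hANint M').const_mul 2))
      (((hANmeas N).sub (hANmeas M')).pow_const 2).aestronglyMeasurable ?_
    filter_upwards with q
    rw [Real.norm_eq_abs, abs_of_nonneg (sq_nonneg _)]
    simp only [Pi.add_apply]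
    nlinarith [sq_nonneg (AN N q.1 q.2 + AN M' q.1 q.2)]
  have key1 : ∀ N M', ∫ q, (AN N q.1 q.2 - AN M' q.1 q.2)^2 ∂μ ≤ 2 * r N + 2 * r M' := by
    intro N M'
    rw [hr_eq N, hr_eq M']
    calc ∫ q, (AN N q.1 q.2 - AN M' q.1 q.2)^2 ∂μ
        ≤ ∫ q, (2 * (AN N q.1 q.2 - A q.1 q.2)^2 + 2 * (AN M' q.1 q.2 - A q.1 q.2)^2) ∂μ := by
          apply integral_mono (intD2 N M')
            (((intDiffSq N).const_mul 2).add ((intDiffSq M').const_mul 2))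
          intro q
          simp only [Pi.add_apply]
          nlinarith [sq_nonneg (AN N q.1 q.2 + AN M' q.1 q.2 - 2 * A q.1 q.2)]
      _ = 2 * (∫ q, (AN N q.1 q.2 - A q.1 q.2)^2 ∂μ)
          + 2 * (∫ q, (AN M' q.1 q.2 - A q.1 q.2)^2 ∂μ) := by
          rw [integral_add ((intDiffSq N).const_mul 2) ((intDiffSq M').const_mul 2),
            integral_const_mul, integral_const_mul]
  have intDabs : ∀ N M', Integrable (fun q : ℝ × Ω => |AN N q.1 q.2 - AN M' q.1 q.2|) μ :=
    fun N M' => ((intAN1 N).sub (intAN1 M')).abs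
  have key2 : ∀ N M' c, 0 < c → ∫ q, |AN N q.1 q.2 - AN M' q.1 q.2| ∂μ ≤
      1/(2*c) * (2 * r N + 2 * r M') + c/2 * (T - t₀) := by
    intro N M' c hc
    have h2c : (0:ℝ) < 2*c := by linarith
    have habs : ∀ x : ℝ, |x| ≤ 1/(2*c) * x^2 + c/2 := by
      intro x
      have hx1 : |x| * (2*c) ≤ x^2 + c^2 := by nlinarith [sq_nonneg (|x| - c), sq_abs x]
      have hx2 : |x| ≤ (x^2 + c^2)/(2*c) := (le_div_iff₀ h2c).mpr hx1
      calc |x| ≤ (x^2 + c^2)/(2*c) := hx2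
        _ = 1/(2*c) * x^2 + c/2 := by field_simp
    calc ∫ q, |AN N q.1 q.2 - AN M' q.1 q.2| ∂μ
        ≤ ∫ q, (1/(2*c) * (AN N q.1 q.2 - AN M' q.1 q.2)^2 + c/2) ∂μ := by
          apply integral_mono (intDabs N M')
            (((intD2 N M').const_mul (1/(2*c))).add (integrable_const (c/2)))
          intro q
          simp only [Pi.add_apply]
          exact habs _
      _ = 1/(2*c) * (∫ q, (AN N q.1 q.2 - AN M' q.1 q.2)^2 ∂μ) + c/2 * (T - t₀) := by
          rw [integral_add ((intD2 N M').const_mul (1/(2*c))) (integrable_const (c/2)),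
            integral_const_mul, integral_const, smul_eq_mul, measureReal_def, hμuniv, mul_comm (T - t₀) (c/2)]
      _ ≤ 1/(2*c) * (2 * r N + 2 * r M') + c/2 * (T - t₀) := by
          have h0 : (0:ℝ) ≤ 1/(2*c) := by positivity
          nlinarith [mul_le_mul_of_nonneg_left (key1 N M') h0]
  have Kdiff : ∀ N M', ∀ᵐ ω ∂ℙ,
      |K N ω - K M' ω| ≤ ∫ s in Set.Icc t₀ T, |AN N s ω - AN M' s ω| := by
    intro N M'
    filter_upwards [slice N, slice M'] with ω hωN hωM
    have hiN : IntegrableOn (fun s => AN N s ω) (Set.Ioc t₀ t) volume := hωN.mono_set hsub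
    have hiM : IntegrableOn (fun s => AN M' s ω) (Set.Ioc t₀ t) volume := hωM.mono_set hsub
    have e1 : K N ω - K M' ω = ∫ s in Set.Ioc t₀ t, (AN N s ω - AN M' s ω) := by
      simp only [hK]
      rw [intervalIntegral.integral_of_le htl, intervalIntegral.integral_of_le htl,
        ← integral_sub hiN hiM]
    rw [e1]
    calc |∫ s in Set.Ioc t₀ t, (AN N s ω - AN M' s ω)|
        ≤ ∫ s in Set.Ioc t₀ t, |AN N s ω - AN M' s ω| := by
          simpa [Real.norm_eq_abs] using
            norm_integral_le_integral_norm (μ := volume.restrict (Set.Ioc t₀ t))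
              (fun s => AN N s ω - AN M' s ω)
      _ ≤ ∫ s in Set.Icc t₀ T, |AN N s ω - AN M' s ω| :=
          setIntegral_mono_set (hωN.sub hωM).abs
            (Filter.Eventually.of_forall fun s => abs_nonneg _)
            (HasSubset.Subset.eventuallyLE hsub)
  have intAbsDiff : ∀ N M',
      Integrable (fun ω => ∫ s in Set.Icc t₀ T, |AN N s ω - AN M' s ω|) ℙ := by
    intro N M'
    simpa [Real.norm_eq_abs] using ((intAN1 N).sub (intAN1 M')).integral_norm_prod_right
  have swap_eq : ∀ N M', ∫ ω, (∫ s in Set.Icc t₀ T, |AN N s ω - AN M' s ω|) ∂ℙ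
      = ∫ q, |AN N q.1 q.2 - AN M' q.1 q.2| ∂μ := by
    intro N M'
    have h := MeasureTheory.integral_integral_swap
      (f := fun s ω => |AN N s ω - AN M' s ω|)
      (μ := volume.restrict (Set.Icc t₀ T)) (ν := ℙ) (intDabs N M')
    rw [← h]
    exact MeasureTheory.integral_integral (intDabs N M')
  have KL1 : ∀ N M', ∫ ω, |K N ω - K M' ω| ∂ℙ ≤ ∫ q, |AN N q.1 q.2 - AN M' q.1 q.2| ∂μ := by
    intro N M'
    rw [← swap_eq N M']
    exact integral_mono_ae ((intK N).sub (intK M')).abs (intAbsDiff N M') (Kdiff N M')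
  have main : ∀ N M' c, 0 < c → |(∫ ω, Φ (K N ω) ∂ℙ) - ∫ ω, Φ (K M' ω) ∂ℙ| ≤
      M * (1/(2*c) * (2 * r N + 2 * r M') + c/2 * (T - t₀)) := by
    intro N M' c hc
    have s1 : |(∫ ω, Φ (K N ω) ∂ℙ) - ∫ ω, Φ (K M' ω) ∂ℙ| ≤ M * ∫ ω, |K N ω - K M' ω| ∂ℙ := by
      rw [← integral_sub (intΦK N) (intΦK M')]
      calc |∫ ω, (Φ (K N ω) - Φ (K M' ω)) ∂ℙ|
          ≤ ∫ ω, |Φ (K N ω) - Φ (K M' ω)| ∂ℙ := by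
            simpa [Real.norm_eq_abs] using
              norm_integral_le_integral_norm (μ := ℙ) (fun ω => Φ (K N ω) - Φ (K M' ω))
        _ ≤ ∫ ω, M * |K N ω - K M' ω| ∂ℙ :=
            integral_mono ((intΦK N).sub (intΦK M')).abs
              (((intK N).sub (intK M')).abs.const_mul M) (fun ω => hΦlip _ _)
        _ = M * ∫ ω, |K N ω - K M' ω| ∂ℙ := integral_const_mul M _
    calc |(∫ ω, Φ (K N ω) ∂ℙ) - ∫ ω, Φ (K M' ω) ∂ℙ|
        ≤ M * ∫ ω, |K N ω - K M' ω| ∂ℙ := s1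
      _ ≤ M * (∫ q, |AN N q.1 q.2 - AN M' q.1 q.2| ∂μ) :=
          mul_le_mul_of_nonneg_left (KL1 N M') hM0
      _ ≤ M * (1/(2*c) * (2 * r N + 2 * r M') + c/2 * (T - t₀)) :=
          mul_le_mul_of_nonneg_left (key2 N M' c hc) hM0
  have hTpos : (0:ℝ) < T - t₀ := by linarith
  have hM'pos : (0:ℝ) < M + 1 := by linarith
  have hMM' : M ≤ M + 1 := by linarith
  set M' := M + 1 with hM'def
  have hcauchy : CauchySeq (fun N => ∫ ω, Φ (K N ω) ∂ℙ) := by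
    rw [Metric.cauchySeq_iff]
    intro ε hε
    set c := ε / (2 * M' * (T - t₀)) with hcdef
    have hc : 0 < c := div_pos hε (mul_pos (mul_pos two_pos hM'pos) hTpos)
    have h2c : (0:ℝ) < 2*c := by linarith
    have h12c : (0:ℝ) < 1/(2*c) := one_div_pos.mpr h2c
    set δ := c * ε / (8 * M') with hδdef
    have hδ : 0 < δ := div_pos (mul_pos hc hε) (mul_pos (by norm_num : (0:ℝ) < 8) hM'pos)
    obtain ⟨N₀, hN₀⟩ := (Metric.tendsto_atTop.mp
      (show Tendsto r atTop (nhds 0) from hconv)) δ hδ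
    refine ⟨N₀, fun m hm n hn => ?_⟩
    have hrm : r m < δ := by
      have h := hN₀ m hm
      rw [Real.dist_eq, sub_zero] at h
      exact lt_of_le_of_lt (le_abs_self _) h
    have hrn : r n < δ := by
      have h := hN₀ n hn
      rw [Real.dist_eq, sub_zero] at h
      exact lt_of_le_of_lt (le_abs_self _) h
    have hM'ne : M' ≠ 0 := ne_of_gt hM'pos
    have hTne : T - t₀ ≠ 0 := ne_of_gt hTpos
    have hcne : c ≠ 0 := ne_of_gt hc
    have e1 : M' * (c/2) * (T - t₀) = ε/4 := by
      rw [hcdef]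
      exact pdf_arith1 M' (T - t₀) ε hM'ne hTne
    have e2 : M' * (1/(2*c)) * (2*δ + 2*δ) = ε/4 := by
      rw [hδdef]
      exact pdf_arith2 M' c ε hM'ne hcne
    rw [Real.dist_eq]
    have hX : (0:ℝ) ≤ 1/(2*c) * (2 * r m + 2 * r n) :=
      mul_nonneg h12c.le (by linarith [hr_nonneg m, hr_nonneg n])
    have hY : (0:ℝ) ≤ c/2 * (T - t₀) := mul_nonneg (by linarith) hTpos.le
    calc |(∫ ω, Φ (K m ω) ∂ℙ) - ∫ ω, Φ (K n ω) ∂ℙ|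
        ≤ M * (1/(2*c) * (2 * r m + 2 * r n) + c/2 * (T - t₀)) := main m n c hc
      _ ≤ M' * (1/(2*c)) * (2 * r m + 2 * r n) + M' * (c/2) * (T - t₀) := by
          nlinarith [mul_nonneg (sub_nonneg.mpr hMM') hX, mul_nonneg (sub_nonneg.mpr hMM') hY]
      _ < M' * (1/(2*c)) * (2*δ + 2*δ) + M' * (c/2) * (T - t₀) := by
          have hpos : (0:ℝ) < M' * (1/(2*c)) := mul_pos hM'pos h12c
          have hlt : 2 * r m + 2 * r n < 2*δ + 2*δ := by linarith
          exact add_lt_add_left (mul_lt_mul_of_pos_left hlt hpos) _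
      _ = ε/4 + ε/4 := by rw [e2, e1]
      _ < ε := by linarith
  obtain ⟨l, hl⟩ := cauchySeq_tendsto_of_complete hcauchy
  refine ⟨l, ?_⟩
  have goal_eq : (fun N : ℕ => ∫ ω, Φ (K N ω) ∂ℙ) = (fun N : ℕ =>
      ∫ ω, f (p * Real.exp (-(∫ s in t₀..t, AN N s ω)) /
            (1 + p * (-1 + Real.exp (-(∫ s in t₀..t, AN N s ω))))) *
          (Real.exp (-(∫ s in t₀..t, AN N s ω)) /
            (1 + p * (-1 + Real.exp (-(∫ s in t₀..t, AN N s ω))))^2) ∂ℙ) := by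
    funext N
    simp only [hΦ, hK]
  exact goal_eq ▸ hl
end

section
/- Let (Ω, ℱ, ℙ) be a probability space and let P₀ and K be independent real random variables on Ω such that P₀ has a probability density function f_{P₀} (with respect to Lebesgue measure on ℝ) vanishing outside (0,1). Define Y = 1 / (1 + e^{−K}(−1 + 1/P₀)). Then Y takes values in (0,1) almost surely and has probability density function f_Y given by f_Y(y) = E[f_{P₀}(h(y,K)) · g(y,K)] for y ∈ (0,1), and f_Y(y) = 0 for y outside (0,1). -/
open MeasureTheory ProbabilityTheory Set

noncomputable def psiF (e p : ℝ) : ℝ := p * e / (1 + p * (-1 + e))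

lemma psi_denom_pos {e p : ℝ} (he : 0 < e) (hp : p ∈ Ioo (0:ℝ) 1) :
    0 < 1 + p * (-1 + e) := by nlinarith [hp.1, hp.2]

lemma psi_mem {e p : ℝ} (he : 0 < e) (hp : p ∈ Ioo (0:ℝ) 1) :
    psiF e p ∈ Ioo (0:ℝ) 1 := by
  have hd := psi_denom_pos he hp
  constructor
  · exact div_pos (by nlinarith [hp.1]) hd
  · rw [psiF, div_lt_one hd]; nlinarith [hp.2]

lemma psi_inv {e p : ℝ} (he : 0 < e) (hp : p ∈ Ioo (0:ℝ) 1) :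
    psiF e⁻¹ (psiF e p) = p := by
  have hd := psi_denom_pos he hp
  have he' : e ≠ 0 := ne_of_gt he
  have key : 1 + psiF e p * (-1 + e⁻¹) = (1 + p * (-1 + e))⁻¹ := by
    rw [psiF]; field_simp; ring
  rw [psiF, key, psiF]
  field_simp

lemma psi_hasDerivAt {e p : ℝ} (he : 0 < e) (hp : p ∈ Ioo (0:ℝ) 1) :
    HasDerivAt (psiF e) (e / (1 + p * (-1 + e))^2) p := by
  have hd := psi_denom_pos he hp
  have h1 : HasDerivAt (fun p : ℝ => p * e) e p := by simpa using (hasDerivAt_id p).mul_const e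
  have h2 : HasDerivAt (fun p : ℝ => 1 + p * (-1 + e)) (-1 + e) p := by
    simpa using ((hasDerivAt_id p).mul_const (-1 + e)).const_add 1
  have := h1.div h2 hd.ne'
  exact this.congr_deriv (by congr 1; ring)

lemma psi_image {e : ℝ} (he : 0 < e) : psiF e '' (Ioo 0 1) = Ioo (0:ℝ) 1 := by
  apply Subset.antisymm
  · rintro y ⟨p, hp, rfl⟩; exact psi_mem he hp
  · intro y hy
    refine ⟨psiF e⁻¹ y, psi_mem (inv_pos.mpr he) hy, ?_⟩
    have := psi_inv (inv_pos.mpr he) hy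
    rwa [inv_inv] at this

lemma psi_injOn {e : ℝ} (he : 0 < e) : InjOn (psiF e) (Ioo 0 1) := by
  intro a ha b hb h
  have := psi_inv he ha
  rw [h, psi_inv he hb] at this
  exact this.symm

lemma psi_formula {k p : ℝ} (hp : p ∈ Ioo (0:ℝ) 1) :
    1 / (1 + Real.exp (-k) * (-1 + 1 / p)) = psiF (Real.exp k) p := by
  have hE : 0 < Real.exp k := Real.exp_pos k
  have hd := psi_denom_pos hE hp
  have hp0 : p ≠ 0 := ne_of_gt hp.1
  have hX : 1 + Real.exp (-k) * (-1 + 1 / p) =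
      (1 + p * (-1 + Real.exp k)) / (p * Real.exp k) := by
    rw [Real.exp_neg]
    field_simp
    ring
  rw [psiF, hX, one_div_div]

lemma psi_measurable : Measurable (fun q : ℝ × ℝ => psiF (Real.exp q.2) q.1) := by
  unfold psiF
  fun_prop

noncomputable def Gfun (f₀ : ℝ → ℝ) (y k : ℝ) : ℝ :=
  f₀ (y * Real.exp (-k) / (1 + y * (-1 + Real.exp (-k)))) *
    (Real.exp (-k) / (1 + y * (-1 + Real.exp (-k)))^2)

lemma Gfun_nonneg (f₀ : ℝ → ℝ) (hf₀nonneg : ∀ x, 0 ≤ f₀ x) (y k : ℝ) : 0 ≤ Gfun f₀ y k :=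
  mul_nonneg (hf₀nonneg _) (div_nonneg (Real.exp_pos _).le (sq_nonneg _))

lemma Gfun_eq_psi (f₀ : ℝ → ℝ) (y k : ℝ) :
    Gfun f₀ y k = f₀ (psiF (Real.exp (-k)) y) *
      (Real.exp (-k) / (1 + y * (-1 + Real.exp (-k)))^2) := rfl

lemma Gfun_measurable (f₀ : ℝ → ℝ) (hf₀meas : Measurable f₀) :
    Measurable (fun q : ℝ × ℝ => Gfun f₀ q.1 q.2) := by
  unfold Gfun
  fun_prop

lemma inner_cov (f₀ : ℝ → ℝ) (hf₀meas : Measurable f₀) (hf₀nonneg : ∀ x, 0 ≤ f₀ x)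
    (hsupp : ∀ x ∉ Set.Ioo (0:ℝ) 1, f₀ x = 0) (k : ℝ) {s : Set ℝ} (hs : MeasurableSet s) :
    (volume.withDensity (fun x => ENNReal.ofReal (f₀ x))) {p | psiF (Real.exp k) p ∈ s}
      = ∫⁻ y in Set.Ioo (0:ℝ) 1, s.indicator 1 y * ENNReal.ofReal (Gfun f₀ y k) := by
  have hI : MeasurableSet (Ioo (0:ℝ) 1) := measurableSet_Ioo
  have hE : (0:ℝ) < Real.exp k := Real.exp_pos k
  have hee : (0:ℝ) < Real.exp (-k) := Real.exp_pos (-k)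
  have hsec : Measurable (fun p : ℝ => psiF (Real.exp k) p) :=
    psi_measurable.comp (measurable_id.prodMk measurable_const)
  have hA : MeasurableSet {p : ℝ | psiF (Real.exp k) p ∈ s} := hsec hs
  rw [withDensity_apply _ hA, ← lintegral_indicator hA]
  have hpt : ∀ p : ℝ, ({p : ℝ | psiF (Real.exp k) p ∈ s}).indicator
      (fun p => ENNReal.ofReal (f₀ p)) p
      = (Ioo (0:ℝ) 1).indicator (fun p => s.indicator 1 (psiF (Real.exp k) p)
          * ENNReal.ofReal (f₀ p)) p := by
    intro p
    by_cases hpI : p ∈ Ioo (0:ℝ) 1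
    · by_cases hps : psiF (Real.exp k) p ∈ s
      · simp [Set.indicator_of_mem, hpI, hps, Set.mem_setOf_eq]
      · simp [Set.indicator_of_notMem, hps, Set.indicator_of_mem hpI, Set.mem_setOf_eq]
    · simp [hsupp p hpI, Set.indicator_apply]
  rw [lintegral_congr hpt, lintegral_indicator hI]
  -- change of variables on (0,1)
  have himg : psiF (Real.exp (-k)) '' (Ioo 0 1) = Ioo (0:ℝ) 1 := psi_image hee
  have hder : ∀ y ∈ Ioo (0:ℝ) 1, HasFDerivWithinAt (psiF (Real.exp (-k)))
      (ContinuousLinearMap.smulRight (1 : ℝ →L[ℝ] ℝ)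
        (Real.exp (-k) / (1 + y * (-1 + Real.exp (-k)))^2)) (Ioo 0 1) y :=
    fun y hy => (psi_hasDerivAt hee hy).hasFDerivAt.hasFDerivWithinAt
  have hcv := lintegral_image_eq_lintegral_abs_det_fderiv_mul volume hI hder (psi_injOn hee)
    (fun p => s.indicator 1 (psiF (Real.exp k) p) * ENNReal.ofReal (f₀ p))
  rw [himg] at hcv
  rw [hcv]
  refine setLIntegral_congr_fun hI (fun y hy => ?_)
  have hinv : psiF (Real.exp k) (psiF (Real.exp (-k)) y) = y := by
    have h := psi_inv hee hy
    rwa [show (Real.exp (-k))⁻¹ = Real.exp k from by rw [Real.exp_neg, inv_inv]] at h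
  have hd := psi_denom_pos hee hy
  have hdpos : (0:ℝ) < Real.exp (-k) / (1 + y * (-1 + Real.exp (-k)))^2 :=
    div_pos hee (pow_pos hd 2)
  rw [ContinuousLinearMap.smulRight_one_eq_toSpanSingleton, ContinuousLinearMap.det_toSpanSingleton, hinv, abs_of_pos hdpos]
  rw [Gfun_eq_psi f₀ y k, ENNReal.ofReal_mul (hf₀nonneg _)]
  ring

theorem rvt_density_of_logistic_transform
    {Ω : Type*} [MeasurableSpace Ω] (μ : Measure Ω) [IsProbabilityMeasure μ]
    (P₀ K : Ω → ℝ) (hP₀ : Measurable P₀) (hK : Measurable K)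
    (hindep : IndepFun P₀ K μ)
    (f₀ : ℝ → ℝ) (hf₀meas : Measurable f₀) (hf₀nonneg : ∀ x, 0 ≤ f₀ x)
    (hpdf : Measure.map P₀ μ =
      volume.withDensity (fun x => ENNReal.ofReal (f₀ x)))
    (hsupp : ∀ x ∉ Set.Ioo (0:ℝ) 1, f₀ x = 0)
    (Y : Ω → ℝ)
    (hY : ∀ ω, Y ω = 1 / (1 + Real.exp (-(K ω)) * (-1 + 1 / P₀ ω))) :
    (∀ᵐ ω ∂μ, Y ω ∈ Set.Ioo (0:ℝ) 1) ∧
    Measure.map Y μ = volume.withDensity (fun y => ENNReal.ofReal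
      (if y ∈ Set.Ioo (0:ℝ) 1 then
        ∫ ω, f₀ (y * Real.exp (-(K ω)) / (1 + y * (-1 + Real.exp (-(K ω))))) *
          (Real.exp (-(K ω)) / (1 + y * (-1 + Real.exp (-(K ω))))^2) ∂μ
      else 0)) := by
  classical
  have hI : MeasurableSet (Ioo (0:ℝ) 1) := measurableSet_Ioo
  set ρ : Measure ℝ := volume.withDensity (fun x => ENNReal.ofReal (f₀ x)) with hρ
  haveI : IsProbabilityMeasure (Measure.map K μ) := Measure.isProbabilityMeasure_map hK.aemeasurable
  haveI : IsProbabilityMeasure ρ := hpdf ▸ Measure.isProbabilityMeasure_map hP₀.aemeasurable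
  -- P₀ ∈ Ioo a.s.
  have hP₀mem : ∀ᵐ ω ∂μ, P₀ ω ∈ Ioo (0:ℝ) 1 := by
    rw [ae_iff]
    have hset : {ω | ¬ P₀ ω ∈ Ioo (0:ℝ) 1} = P₀ ⁻¹' (Ioo (0:ℝ) 1)ᶜ := rfl
    rw [hset, ← Measure.map_apply hP₀ hI.compl, hpdf, withDensity_apply _ hI.compl]
    have hz : ∀ x ∈ (Ioo (0:ℝ) 1)ᶜ, ENNReal.ofReal (f₀ x) = (0 : ENNReal) := by
      intro x hx; simp [hsupp x hx]
    rw [setLIntegral_congr_fun hI.compl hz, lintegral_zero]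
  have hYae : Y =ᵐ[μ] fun ω => psiF (Real.exp (K ω)) (P₀ ω) := by
    filter_upwards [hP₀mem] with ω hω
    rw [hY ω, psi_formula hω]
  have part1 : ∀ᵐ ω ∂μ, Y ω ∈ Ioo (0:ℝ) 1 := by
    filter_upwards [hP₀mem, hYae] with ω h1 h2
    rw [h2]; exact psi_mem (Real.exp_pos _) h1
  refine ⟨part1, ?_⟩
  have hΦ : Measurable (fun q : ℝ × ℝ => psiF (Real.exp q.2) q.1) := psi_measurable
  have hmapY : Measure.map Y μ
      = Measure.map (fun q : ℝ × ℝ => psiF (Real.exp q.2) q.1) (ρ.prod (Measure.map K μ)) := by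
    rw [Measure.map_congr hYae]
    have hprod : Measure.map (fun ω => (P₀ ω, K ω)) μ = ρ.prod (Measure.map K μ) := by
      rw [← hpdf]
      exact (indepFun_iff_map_prod_eq_prod_map_map hP₀.aemeasurable hK.aemeasurable).mp hindep
    rw [← hprod, Measure.map_map hΦ (hP₀.prodMk hK)]
    rfl
  set F : ℝ → ENNReal := fun y => ∫⁻ k, ENNReal.ofReal (Gfun f₀ y k) ∂(Measure.map K μ) with hF
  have hGmeas := Gfun_measurable f₀ hf₀meas
  have hFmeas : Measurable F := Measurable.lintegral_prod_right
    (ENNReal.measurable_ofReal.comp hGmeas)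
  have key : ∀ s : Set ℝ, MeasurableSet s →
      (Measure.map Y μ) s = ∫⁻ y in s, (Ioo (0:ℝ) 1).indicator F y := by
    intro s hs
    rw [hmapY, Measure.map_apply hΦ hs, Measure.prod_apply_symm (hΦ hs)]
    have hptw : ∀ k : ℝ,
        ρ ((fun p => (p, k)) ⁻¹' ((fun q : ℝ × ℝ => psiF (Real.exp q.2) q.1) ⁻¹' s))
        = ∫⁻ y in Ioo (0:ℝ) 1, s.indicator 1 y * ENNReal.ofReal (Gfun f₀ y k) :=
      fun k => inner_cov f₀ hf₀meas hf₀nonneg hsupp k hs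
    rw [lintegral_congr hptw]
    have hswap : ∫⁻ k, (∫⁻ y in Ioo (0:ℝ) 1,
          s.indicator 1 y * ENNReal.ofReal (Gfun f₀ y k)) ∂(Measure.map K μ)
        = ∫⁻ y in Ioo (0:ℝ) 1, ∫⁻ k,
            s.indicator 1 y * ENNReal.ofReal (Gfun f₀ y k) ∂(Measure.map K μ) := by
      apply lintegral_lintegral_swap
      apply Measurable.aemeasurable
      exact ((measurable_one.indicator hs).comp measurable_snd).mul
        ((ENNReal.measurable_ofReal.comp hGmeas).comp (measurable_snd.prodMk measurable_fst))
    rw [hswap]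
    have hin : ∀ y : ℝ, (∫⁻ k, s.indicator 1 y * ENNReal.ofReal (Gfun f₀ y k) ∂(Measure.map K μ))
        = s.indicator 1 y * F y := by
      intro y
      refine lintegral_const_mul' _ _ ?_
      by_cases hys : y ∈ s
      · simp [Set.indicator_of_mem hys]
      · simp [Set.indicator_of_notMem hys]
    rw [lintegral_congr hin, ← lintegral_indicator hI, ← lintegral_indicator hs]
    apply lintegral_congr
    intro y
    by_cases hyI : y ∈ Ioo (0:ℝ) 1 <;> by_cases hys : y ∈ s <;>
      simp [Set.indicator_apply, hyI, hys]
  have hmap_eq : Measure.map Y μ = volume.withDensity ((Ioo (0:ℝ) 1).indicator F) := by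
    refine Measure.ext fun s hs => ?_
    rw [key s hs, withDensity_apply _ hs]
  haveI : IsProbabilityMeasure (Measure.map Y μ) := Measure.isProbabilityMeasure_map
    (((hΦ.comp (hP₀.prodMk hK)).aemeasurable).congr hYae.symm)
  have htot : ∫⁻ y, (Ioo (0:ℝ) 1).indicator F y ≠ ⊤ := by
    have h1 := key Set.univ MeasurableSet.univ
    rw [Measure.restrict_univ, measure_univ] at h1
    rw [← h1]
    exact ENNReal.one_ne_top
  have haelt : ∀ᵐ y ∂(volume : Measure ℝ), (Ioo (0:ℝ) 1).indicator F y < ⊤ :=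
    ae_lt_top (hFmeas.indicator hI) htot
  rw [hmap_eq]
  apply withDensity_congr_ae
  filter_upwards [haelt] with y hy
  by_cases hyI : y ∈ Ioo (0:ℝ) 1
  · rw [Set.indicator_of_mem hyI] at hy ⊢
    rw [if_pos hyI]
    have hGy : Measurable fun k => Gfun f₀ y k :=
      hGmeas.comp (measurable_const.prodMk measurable_id)
    have hFy : F y = ∫⁻ ω, ENNReal.ofReal (Gfun f₀ y (K ω)) ∂μ := by
      rw [hF]
      exact lintegral_map (ENNReal.measurable_ofReal.comp hGy) hK
    have hnn : 0 ≤ᵐ[μ] fun ω => Gfun f₀ y (K ω) :=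
      Filter.Eventually.of_forall fun ω => Gfun_nonneg f₀ hf₀nonneg y (K ω)
    have hint : Integrable (fun ω => Gfun f₀ y (K ω)) μ := by
      refine ⟨(hGy.comp hK).aestronglyMeasurable, ?_⟩
      rw [hasFiniteIntegral_iff_ofReal hnn, ← hFy]
      exact hy
    have hor := ofReal_integral_eq_lintegral_ofReal hint hnn
    rw [hFy, ← hor]
    rfl
  · rw [Set.indicator_of_notMem hyI, if_neg hyI]
    simp
end
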